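/- Let δ ≥ 3 be an integer. If a connected locally finite graph G contains a subgraph which, with its own combinatorial metric, is quasi-isometric to the infinite δ-regular tree, then G does not have polynomial containment of degree at most d for any non-negative integer d. -/

import Mathlib

universe u

/-- A map between the vertex sets of two graphs (each vertex set carrying the combinatorial
metric `SimpleGraph.dist`) is a quasi-isometry. -/
def GraphQuasiIsometry {V : Type*} {V' : Type*} (G : SimpleGraph V) (G' : SimpleGraph V')
    (f : V → V') : Prop :=
  ∃ lam ε K : ℝ, 1 ≤ lam ∧ 0 ≤ ε ∧ 0 ≤ K ∧
    (∀ x y : V,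
      lam⁻¹ * (G.dist x y : ℝ) - ε ≤ (G'.dist (f x) (f y) : ℝ) ∧
      (G'.dist (f x) (f y) : ℝ) ≤ lam * (G.dist x y : ℝ) + ε) ∧
    (∀ v' : V', ∃ x : V, (G'.dist v' (f x) : ℝ) ≤ K)

/-- Two graphs are quasi-isometric (with their combinatorial metrics). -/
def QuasiIsometric {V V' : Type*} (G : SimpleGraph V) (G' : SimpleGraph V') : Prop :=
  ∃ f : V → V', GraphQuasiIsometry G G' f

/-- `G` has polynomial containment of degree at most `d`. -/
def HasPolyContainment {V : Type*} (G : SimpleGraph V) (d : ℕ) : Prop :=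
  ∃ C : ℝ, 0 < C ∧
    ∀ X₀ : Set V, X₀.Finite →
      ∃ (W : ℕ → Set V) (X : ℕ → Set V),
        X 0 = X₀ ∧
        (∀ n : ℕ, 1 ≤ n → (W n).Finite ∧ ((W n).ncard : ℝ) ≤ C * (n : ℝ) ^ d) ∧
        (∀ n : ℕ, X (n + 1) =
          {v : V | ∃ u ∈ X n, v = u ∨ G.Adj u v} \ (⋃ k ∈ Finset.Icc 1 (n + 1), W k)) ∧
        (∀ n : ℕ, Disjoint (X n) (W (n + 1))) ∧
        (∃ T : ℕ, 0 < T ∧ ∀ n : ℕ, T ≤ n → X n = X T)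

/-- `G` has all vertex degrees bounded above by some `D`. -/
def BoundedDegree {V : Type*} (G : SimpleGraph V) : Prop :=
  ∃ D : ℕ, ∀ v : V, (G.neighborSet v).Finite ∧ (G.neighborSet v).ncard ≤ D

/-- Number of vertices at distance at most `n` from the base vertex `g₀`. -/
noncomputable def growthFunction {V : Type*} (G : SimpleGraph V) (g₀ : V) (n : ℕ) : ℕ :=
  {v : V | G.dist g₀ v ≤ n}.ncard

/-- Edges of `G` with exactly one endpoint in `K`. -/
def edgeBoundary {V : Type*} (G : SimpleGraph V) (K : Set V) : Set (Sym2 V) :=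
  {e ∈ G.edgeSet | ∃ u v : V, e = s(u, v) ∧ u ∈ K ∧ v ∉ K}

/-- Cheeger constant of a graph. -/
noncomputable def cheegerConstant {V : Type*} (G : SimpleGraph V) : ℝ :=
  sInf {r : ℝ | ∃ K : Set V, K.Finite ∧ K.Nonempty ∧
    r = ((edgeBoundary G K).ncard : ℝ) / (K.ncard : ℝ)}

/-- Cayley graph of a group with respect to a set `S`. -/
def cayleyGraph (Γ : Type*) [Group Γ] (S : Set Γ) : SimpleGraph Γ :=
  SimpleGraph.fromRel (fun g h => ∃ s ∈ S, h = g * s)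

/-- Word length of `g` with respect to `S`. -/
noncomputable def wordLength {Γ : Type*} [Group Γ] (S : Set Γ) (g : Γ) : ℕ :=
  sInf {n : ℕ | ∃ l : List Γ, l.length = n ∧ (∀ x ∈ l, x ∈ S ∪ S⁻¹) ∧ l.prod = g}

def VirtuallyNilpotent (Γ : Type*) [Group Γ] : Prop :=
  ∃ H : Subgroup Γ, H.FiniteIndex ∧ Group.IsNilpotent H

/-- The infinite `δ`-regular tree. -/
def IsRegularTree {U : Type*} (T : SimpleGraph U) (δ : ℕ) : Prop :=
  Infinite U ∧ T.IsTree ∧ ∀ v : U, (T.neighborSet v).Finite ∧ (T.neighborSet v).ncard = δ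

/-- `a` and `b` generate a free semigroup of rank two. -/
def GeneratesFreeSemigroup {Γ : Type*} [Group Γ] (a b : Γ) : Prop :=
  Function.Injective
    (FreeSemigroup.lift (fun x : Bool => if x then a else b) : FreeSemigroup Bool →ₙ* Γ)

/-- Elementary amenable groups: the smallest class containing finite and abelian groups and
closed under subgroups, quotients, extensions and directed unions. -/
inductive ElementaryAmenable : (G : Type u) → [inst : Group G] → Prop
  | finite (G : Type u) [Group G] [Finite G] : ElementaryAmenable G
  | abelian (G : Type u) [Group G] (h : ∀ a b : G, a * b = b * a) : ElementaryAmenable G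
  | subgroup {G H : Type u} [Group G] [Group H] (f : H →* G) (hf : Function.Injective f)
      (hG : ElementaryAmenable G) : ElementaryAmenable H
  | quotient {G H : Type u} [Group G] [Group H] (f : G →* H) (hf : Function.Surjective f)
      (hG : ElementaryAmenable G) : ElementaryAmenable H
  | extension {G : Type u} [Group G] (N : Subgroup G) [N.Normal]
      (hN : ElementaryAmenable N) (hQ : ElementaryAmenable (G ⧸ N)) : ElementaryAmenable G
  | directedUnion {G : Type u} [Group G] {ι : Type u} (H : ι → Subgroup G)
      (hdir : ∀ i j, ∃ k, H i ≤ H k ∧ H j ≤ H k)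
      (hunion : ∀ g : G, ∃ i, g ∈ H i)
      (hEA : ∀ i, ElementaryAmenable (H i)) : ElementaryAmenable G


open SimpleGraph

namespace FFAux

variable {α : Type*} {β' : Type*} {G : SimpleGraph α}

lemma exists_walk_getVert_le {x y : α} (p : G.Walk x y) (i : ℕ) :
    ∃ q : G.Walk x (p.getVert i), q.length ≤ i := by
  induction p generalizing i with
  | nil => exact ⟨Walk.nil, by simp⟩
  | @cons a b c h q ih =>
    cases i with
    | zero => exact ⟨Walk.nil.copy rfl (by simp [Walk.getVert_zero]), by simp⟩
    | succ i =>
      obtain ⟨r, hr⟩ := ih i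
      exact ⟨Walk.cons h (r.copy rfl (by simp [Walk.getVert_cons_succ])),
        by simpa using Nat.succ_le_succ hr⟩

lemma exists_walk_getVert_end (p : G.Walk x y) (i : ℕ) :
    ∃ q : G.Walk (p.getVert i) y, q.length ≤ p.length - i := by
  induction p generalizing i with
  | nil => exact ⟨Walk.nil.copy (by cases i <;> rfl) rfl, by simp⟩
  | @cons a b c h q ih =>
    cases i with
    | zero =>
      exact ⟨(Walk.cons h q).copy (by simp [Walk.getVert_zero]) rfl, by simp⟩
    | succ i =>
      obtain ⟨r, hr⟩ := ih i
      exact ⟨r.copy (by simp [Walk.getVert_cons_succ]) rfl, by simpa using hr.trans (by omega)⟩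

lemma dist_getVert_le (p : G.Walk x y) (i : ℕ) : G.dist x (p.getVert i) ≤ i := by
  obtain ⟨q, hq⟩ := exists_walk_getVert_le p i
  exact (SimpleGraph.dist_le q).trans hq

lemma dist_getVert_end_le (p : G.Walk x y) (i : ℕ) : G.dist (p.getVert i) y ≤ p.length - i := by
  obtain ⟨q, hq⟩ := exists_walk_getVert_end p i
  exact (SimpleGraph.dist_le q).trans hq

lemma getVert_map {G' : SimpleGraph β'} (f : G →g G') (p : G.Walk x y) (i : ℕ) :
    (p.map f).getVert i = f (p.getVert i) := by
  induction p generalizing i with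
  | nil => simp [Walk.getVert]
  | cons h q ih =>
    cases i with
    | zero => simp
    | succ i => simpa using ih i

lemma getVert_dist_eq (hc : G.Connected) (p : G.Walk x y) (hp : p.length = G.dist x y)
    {i : ℕ} (hi : i ≤ p.length) :
    G.dist x (p.getVert i) = i ∧ G.dist (p.getVert i) y = p.length - i := by
  have h1 := dist_getVert_le p i
  have h2 := dist_getVert_end_le p i
  have h3 := hc.dist_triangle (u := x) (v := p.getVert i) (w := y)
  omega

lemma exists_adj_dist (hc : G.Connected) {x v : α} {ℓ : ℕ} (h : G.dist x v = ℓ + 1) :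
    ∃ w, G.Adj w v ∧ G.dist x w = ℓ := by
  obtain ⟨p, hp⟩ := hc.exists_walk_length_eq_dist x v
  have hlen : p.length = ℓ + 1 := by rw [hp, h]
  have hi : ℓ ≤ p.length := by omega
  have hd : G.dist x (p.getVert ℓ) = ℓ := by
    have h1 := dist_getVert_le p ℓ
    have h2 := dist_getVert_end_le p ℓ
    have h3 := hc.dist_triangle (u := x) (v := p.getVert ℓ) (w := v)
    omega
  refine ⟨p.getVert ℓ, ?_, hd⟩
  have := p.adj_getVert_succ (i := ℓ) (by omega)
  rw [show ℓ + 1 = p.length by omega] at this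
  simpa [Walk.getVert_length] using this

lemma ball_finite (hc : G.Connected) (hlf : ∀ v : α, (G.neighborSet v).Finite)
    (x : α) (n : ℕ) : {v : α | G.dist x v ≤ n}.Finite := by
  induction n with
  | zero =>
    refine Set.Finite.subset (Set.finite_singleton x) ?_
    intro v hv
    simp only [Set.mem_setOf_eq, Nat.le_zero] at hv
    simp [((hc.dist_eq_zero_iff).mp hv).symm]
  | succ n ih =>
    have : {v : α | G.dist x v ≤ n + 1} ⊆
        {v : α | G.dist x v ≤ n} ∪ ⋃ w ∈ {v : α | G.dist x v ≤ n}, G.neighborSet w := by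
      intro v hv
      simp only [Set.mem_setOf_eq] at hv
      rcases Nat.lt_or_ge (G.dist x v) (n+1) with h | h
      · exact Or.inl (by simpa using Nat.lt_succ_iff.mp h)
      · have : G.dist x v = n + 1 := le_antisymm hv h
        obtain ⟨w, hw, hwd⟩ := exists_adj_dist hc this
        exact Or.inr (Set.mem_biUnion (show w ∈ {v : α | G.dist x v ≤ n} by simp [hwd]) hw)
    exact Set.Finite.subset (ih.union (ih.biUnion (fun w _ => hlf w))) this

lemma sphere_finite (hc : G.Connected) (hlf : ∀ v : α, (G.neighborSet v).Finite)
    (x : α) (n : ℕ) : {v : α | G.dist x v = n}.Finite :=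
  (ball_finite hc hlf x n).subset (fun v hv => le_of_eq hv)

lemma ncard_biUnion_le {ι : Type*} (s : Finset ι) (f : ι → Set α) :
    (⋃ i ∈ s, f i).ncard ≤ ∑ i ∈ s, (f i).ncard := by
  classical
  induction s using Finset.induction with
  | empty => simp
  | @insert a s ha ih =>
    rw [Finset.set_biUnion_insert, Finset.sum_insert ha]
    exact (Set.ncard_union_le _ _).trans (by omega)

lemma le_ncard_biUnion {ι : Type*} (s : Finset ι) (f : ι → Set α)
    (hf : ∀ i ∈ s, (f i).Finite)
    (hdisj : ∀ i ∈ s, ∀ j ∈ s, i ≠ j → Disjoint (f i) (f j)) :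
    ∑ i ∈ s, (f i).ncard ≤ (⋃ i ∈ s, f i).ncard := by
  classical
  induction s using Finset.induction with
  | empty => simp
  | @insert a s ha ih =>
    rw [Finset.set_biUnion_insert, Finset.sum_insert ha]
    have hdisj' : Disjoint (f a) (⋃ i ∈ s, f i) := by
      refine Set.disjoint_iUnion_right.mpr (fun i => Set.disjoint_iUnion_right.mpr fun hi => ?_)
      exact hdisj a (Finset.mem_insert_self a s) i (Finset.mem_insert_of_mem hi)
        (fun h => ha (h ▸ hi))
    rw [Set.ncard_union_eq hdisj' (hf a (Finset.mem_insert_self a s))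
      (Set.Finite.biUnion s.finite_toSet (fun i hi => hf i (Finset.mem_insert_of_mem hi)))]
    have := ih (fun i hi => hf i (Finset.mem_insert_of_mem hi))
      (fun i hi j hj hij => hdisj i (Finset.mem_insert_of_mem hi) j (Finset.mem_insert_of_mem hj) hij)
    omega

end FFAux
section TestC
open SimpleGraph
namespace FFAux

variable {α : Type*} {G : SimpleGraph α}

lemma isPath_concat {x v u : α} {p : G.Walk x v} (hp : p.IsPath) (h : G.Adj v u)
    (hu : u ∉ p.support) : (p.concat h).IsPath := by
  rw [← Walk.isPath_reverse_iff, Walk.reverse_concat]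
  rw [Walk.cons_isPath_iff]
  refine ⟨(Walk.isPath_reverse_iff p).mpr hp, ?_⟩
  rw [Walk.support_reverse]
  simpa using hu

lemma getVert_concat_length {x v u : α} (p : G.Walk x v) (h : G.Adj v u) :
    (p.concat h).getVert p.length = v := by
  rw [Walk.concat_eq_append, Walk.getVert_append]
  simp

/-- In an acyclic connected graph, adjacent vertices have different distances to any basepoint. -/
lemma adj_dist_ne (hc : G.Connected) (hac : G.IsAcyclic) (x : α) {u v : α}
    (h : G.Adj u v) : G.dist x u ≠ G.dist x v := by
  intro heq
  rcases Nat.eq_zero_or_pos (G.dist x u) with h0 | hℓpos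
  · have hxu : x = u := (hc.dist_eq_zero_iff).mp h0
    have hxv : x = v := (hc.dist_eq_zero_iff).mp (heq ▸ h0)
    exact h.ne (hxu ▸ hxv)
  obtain ⟨p, hpp, hpl⟩ := hc.exists_path_of_dist x u
  obtain ⟨q, hqp, hql⟩ := hc.exists_path_of_dist x v
  have hvns : v ∉ p.support := by
    intro hv
    obtain ⟨i, hgv, hile⟩ := Walk.mem_support_iff_exists_getVert.mp hv
    have hdi := (getVert_dist_eq hc p hpl hile).1
    rw [hgv] at hdi
    have hiv : i = p.length := by omega
    rw [hiv, p.getVert_length] at hgv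
    exact h.ne hgv
  have hrp : (p.concat h).IsPath := isPath_concat hpp h hvns
  have hpq := hac.path_unique ⟨p.concat h, hrp⟩ ⟨q, hqp⟩
  have hweq : p.concat h = q := congrArg Subtype.val hpq
  have hlen : (p.concat h).length = q.length := congrArg Walk.length hweq
  rw [Walk.length_concat, hpl, hql] at hlen
  omega

/-- In an acyclic connected graph, a vertex at distance `ℓ+1` has at most one neighbour at
distance `ℓ`. -/
lemma unique_parent (hc : G.Connected) (hac : G.IsAcyclic) {x u v v' : α} {ℓ : ℕ}
    (hu : G.dist x u = ℓ + 1) (hv : G.dist x v = ℓ) (hv' : G.dist x v' = ℓ)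
    (h : G.Adj v u) (h' : G.Adj v' u) : v = v' := by
  obtain ⟨p, hpp, hpl⟩ := hc.exists_path_of_dist x v
  obtain ⟨p', hpp', hpl'⟩ := hc.exists_path_of_dist x v'
  have hns : u ∉ p.support := by
    intro hmem
    obtain ⟨i, hgv, hile⟩ := Walk.mem_support_iff_exists_getVert.mp hmem
    have hdi := (getVert_dist_eq hc p hpl hile).1
    rw [hgv, hu] at hdi
    omega
  have hns' : u ∉ p'.support := by
    intro hmem
    obtain ⟨i, hgv, hile⟩ := Walk.mem_support_iff_exists_getVert.mp hmem
    have hdi := (getVert_dist_eq hc p' hpl' hile).1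
    rw [hgv, hu] at hdi
    omega
  have heq := hac.path_unique ⟨p.concat h, isPath_concat hpp h hns⟩
    ⟨p'.concat h', isPath_concat hpp' h' hns'⟩
  have hweq : p.concat h = p'.concat h' := congrArg Subtype.val heq
  have h1 : (p.concat h).getVert ℓ = v := by
    have := getVert_concat_length p h
    rwa [hpl, hv] at this
  have h2 : (p'.concat h').getVert ℓ = v' := by
    have := getVert_concat_length p' h'
    rwa [hpl', hv'] at this
  rw [← h1, ← h2, hweq]

/-- distance to a neighbour differs by at most one. -/
lemma adj_dist_cases (hc : G.Connected) (x : α) {u v : α} (h : G.Adj u v) :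
    G.dist x v ≤ G.dist x u + 1 := by
  have h1 : G.dist u v = 1 := SimpleGraph.dist_eq_one_iff_adj.mpr h
  have := hc.dist_triangle (u := x) (v := u) (w := v)
  omega

end FFAux
end TestC
section TestD
open SimpleGraph
namespace FFAux

variable {α : Type*} {G : SimpleGraph α} {δ : ℕ}

lemma sphere_step_le (hc : G.Connected)
    (hreg : ∀ v : α, (G.neighborSet v).Finite ∧ (G.neighborSet v).ncard = δ)
    (x : α) {n : ℕ} (hn : 1 ≤ n) :
    {v : α | G.dist x v = n + 1}.ncard ≤ (δ - 1) * {v : α | G.dist x v = n}.ncard := by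
  classical
  have hlf : ∀ v : α, (G.neighborSet v).Finite := fun v => (hreg v).1
  have hS : {v : α | G.dist x v = n}.Finite := sphere_finite hc hlf x n
  set S : Finset α := hS.toFinset with hSdef
  have hcover : {v : α | G.dist x v = n + 1} ⊆
      ⋃ v ∈ S, (G.neighborSet v ∩ {u : α | G.dist x u = n + 1}) := by
    intro u hu
    obtain ⟨w, hw, hwd⟩ := exists_adj_dist hc hu
    refine Set.mem_iUnion.mpr ⟨w, Set.mem_iUnion.mpr ⟨?_, ⟨hw, hu⟩⟩⟩
    rw [hSdef, Set.Finite.mem_toFinset]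
    exact hwd
  have hterm : ∀ v ∈ S, (G.neighborSet v ∩ {u : α | G.dist x u = n + 1}).ncard ≤ δ - 1 := by
    intro v hv
    have hvd : G.dist x v = n := by simpa [hSdef, Set.Finite.mem_toFinset] using hv
    obtain ⟨n', hn'⟩ : ∃ n', n = n' + 1 := ⟨n - 1, by omega⟩
    obtain ⟨w, hw, hwd⟩ := exists_adj_dist hc (by rw [hvd, hn'] : G.dist x v = n' + 1)
    have hwm : w ∈ G.neighborSet v := hw.symm
    have hwn : w ∉ G.neighborSet v ∩ {u : α | G.dist x u = n + 1} := by
      intro hmem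
      have := hmem.2
      simp only [Set.mem_setOf_eq] at this
      omega
    have hfin : (G.neighborSet v ∩ {u : α | G.dist x u = n + 1}).Finite :=
      (hlf v).subset Set.inter_subset_left
    have hins : insert w (G.neighborSet v ∩ {u : α | G.dist x u = n + 1}) ⊆ G.neighborSet v :=
      Set.insert_subset hwm Set.inter_subset_left
    have := Set.ncard_le_ncard hins (hlf v)
    rw [Set.ncard_insert_of_notMem hwn hfin, (hreg v).2] at this
    omega
  calc {v : α | G.dist x v = n + 1}.ncard
      ≤ (⋃ v ∈ S, (G.neighborSet v ∩ {u : α | G.dist x u = n + 1})).ncard :=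
        Set.ncard_le_ncard hcover (Set.Finite.biUnion S.finite_toSet
          (fun v _ => (hlf v).subset Set.inter_subset_left))
    _ ≤ ∑ v ∈ S, (G.neighborSet v ∩ {u : α | G.dist x u = n + 1}).ncard :=
        ncard_biUnion_le S _
    _ ≤ ∑ _v ∈ S, (δ - 1) := Finset.sum_le_sum hterm
    _ = S.card * (δ - 1) := by simp [Finset.sum_const, smul_eq_mul]
    _ = (δ - 1) * {v : α | G.dist x v = n}.ncard := by
        rw [Nat.mul_comm, Set.ncard_eq_toFinset_card _ hS]

lemma sphere_ncard_le (hc : G.Connected)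
    (hreg : ∀ v : α, (G.neighborSet v).Finite ∧ (G.neighborSet v).ncard = δ)
    (hδ : 2 ≤ δ) (x : α) : ∀ ℓ : ℕ, {v : α | G.dist x v = ℓ}.ncard ≤ 2 * (δ - 1) ^ ℓ := by
  have hlf : ∀ v : α, (G.neighborSet v).Finite := fun v => (hreg v).1
  intro ℓ
  induction ℓ with
  | zero =>
    have : {v : α | G.dist x v = 0} ⊆ {x} := by
      intro v hv
      simp only [Set.mem_setOf_eq] at hv
      simp [(hc.dist_eq_zero_iff.mp hv).symm]
    have := Set.ncard_le_ncard this (Set.finite_singleton x)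
    simpa using this.trans (by simp)
  | succ n ih =>
    rcases Nat.eq_zero_or_pos n with rfl | hn
    · have hsp : {v : α | G.dist x v = 1} = G.neighborSet x := by
        ext v; simp [SimpleGraph.dist_eq_one_iff_adj, neighborSet]
      rw [hsp, (hreg x).2]
      have : δ ≤ 2 * (δ - 1) := by omega
      simpa using this
    · calc {v : α | G.dist x v = n + 1}.ncard
          ≤ (δ - 1) * {v : α | G.dist x v = n}.ncard := sphere_step_le hc hreg x hn
        _ ≤ (δ - 1) * (2 * (δ - 1) ^ n) := Nat.mul_le_mul_left _ ih
        _ = 2 * (δ - 1) ^ (n + 1) := by ring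

lemma ball_ncard_le (hc : G.Connected)
    (hreg : ∀ v : α, (G.neighborSet v).Finite ∧ (G.neighborSet v).ncard = δ)
    (hδ : 2 ≤ δ) (x : α) (D : ℕ) :
    {v : α | G.dist x v ≤ D}.ncard ≤ (D + 1) * (2 * (δ - 1) ^ D) := by
  classical
  have hball : {v : α | G.dist x v ≤ D} = ⋃ ℓ ∈ Finset.range (D + 1), {v : α | G.dist x v = ℓ} := by
    ext v
    simp only [Set.mem_setOf_eq, Set.mem_iUnion, Finset.mem_range]
    exact ⟨fun h => ⟨G.dist x v, by omega, rfl⟩, fun ⟨ℓ, hℓ, he⟩ => by omega⟩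
  rw [hball]
  calc (⋃ ℓ ∈ Finset.range (D + 1), {v : α | G.dist x v = ℓ}).ncard
      ≤ ∑ ℓ ∈ Finset.range (D + 1), {v : α | G.dist x v = ℓ}.ncard := ncard_biUnion_le _ _
    _ ≤ ∑ _ℓ ∈ Finset.range (D + 1), 2 * (δ - 1) ^ D := by
        refine Finset.sum_le_sum fun ℓ hℓ => ?_
        refine (sphere_ncard_le hc hreg hδ x ℓ).trans ?_
        exact Nat.mul_le_mul_left _ (Nat.pow_le_pow_right (by omega) (by
          simpa using Nat.lt_succ_iff.mp (Finset.mem_range.mp hℓ)))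
    _ = (D + 1) * (2 * (δ - 1) ^ D) := by simp [Finset.sum_const, smul_eq_mul]

lemma sphere_ncard_ge (hc : G.Connected) (hac : G.IsAcyclic)
    (hreg : ∀ v : α, (G.neighborSet v).Finite ∧ (G.neighborSet v).ncard = δ)
    (hδ : 3 ≤ δ) (x : α) : ∀ ℓ : ℕ, (δ - 1) ^ ℓ ≤ {v : α | G.dist x v = ℓ}.ncard := by
  classical
  have hlf : ∀ v : α, (G.neighborSet v).Finite := fun v => (hreg v).1
  have key : ∀ n : ℕ, (δ - 1) * {v : α | G.dist x v = n}.ncard ≤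
      {v : α | G.dist x v = n + 1}.ncard := by
    intro n
    have hS : {v : α | G.dist x v = n}.Finite := sphere_finite hc hlf x n
    set S : Finset α := hS.toFinset with hSdef
    have hsub : (⋃ v ∈ S, (G.neighborSet v ∩ {u : α | G.dist x u = n + 1})) ⊆
        {v : α | G.dist x v = n + 1} := by
      intro u hu
      simp only [Set.mem_iUnion] at hu
      obtain ⟨v, hv, hmem⟩ := hu
      exact hmem.2
    have hdisj : ∀ v ∈ S, ∀ v' ∈ S, v ≠ v' →
        Disjoint (G.neighborSet v ∩ {u : α | G.dist x u = n + 1})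
          (G.neighborSet v' ∩ {u : α | G.dist x u = n + 1}) := by
      intro v hv v' hv' hne
      rw [Set.disjoint_left]
      rintro u ⟨hu1, hu2⟩ ⟨hu1', _⟩
      have hvd : G.dist x v = n := by simpa [hSdef, Set.Finite.mem_toFinset] using hv
      have hvd' : G.dist x v' = n := by simpa [hSdef, Set.Finite.mem_toFinset] using hv'
      exact hne (unique_parent hc hac hu2 hvd hvd' hu1 hu1')
    have hterm : ∀ v ∈ S, δ - 1 ≤ (G.neighborSet v ∩ {u : α | G.dist x u = n + 1}).ncard := by
      intro v hv
      have hvd : G.dist x v = n := by simpa [hSdef, Set.Finite.mem_toFinset] using hv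
      have hsplit : G.neighborSet v ⊆
          (G.neighborSet v ∩ {u : α | G.dist x u = n + 1}) ∪
          (G.neighborSet v ∩ {u : α | G.dist x u = n - 1}) := by
        intro w hw
        have h1 : G.dist x w ≤ n + 1 := by
          have := adj_dist_cases hc x ((hw : G.Adj v w))
          rw [hvd] at this
          omega
        have h2 : G.dist x v ≤ G.dist x w + 1 := adj_dist_cases hc x ((hw : G.Adj v w).symm)
        rw [hvd] at h2
        have h3 : G.dist x w ≠ n := by
          have := adj_dist_ne hc hac x ((hw : G.Adj v w).symm)
          rw [hvd] at this
          exact fun hh => this (by rw [hh])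
        rcases Nat.lt_or_ge (G.dist x w) n with hlt | hge
        · exact Or.inr ⟨hw, by simp only [Set.mem_setOf_eq]; omega⟩
        · exact Or.inl ⟨hw, by simp only [Set.mem_setOf_eq]; omega⟩
      have hcard1 : (G.neighborSet v ∩ {u : α | G.dist x u = n - 1}).ncard ≤ 1 := by
        rcases Nat.eq_zero_or_pos n with rfl | hn
        · -- n = 0 : v = x and no neighbour has distance 0
          have : G.neighborSet v ∩ {u : α | G.dist x u = 0} = ∅ := by
            ext w
            simp only [Set.mem_inter_iff, Set.mem_setOf_eq, Set.mem_empty_iff_false, iff_false]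
            rintro ⟨hw, hw0⟩
            have hxv : x = v := hc.dist_eq_zero_iff.mp hvd
            have hxw : x = w := hc.dist_eq_zero_iff.mp hw0
            cases hxv
            cases hxw
            exact G.loopless.irrefl x hw
          rw [show (0:ℕ) - 1 = 0 from rfl, this]
          simp
        · obtain ⟨n', rfl⟩ : ∃ n', n = n' + 1 := ⟨n - 1, by omega⟩
          rw [Set.ncard_le_one_iff_eq ((hlf v).subset Set.inter_subset_left)]
          by_cases hne : (G.neighborSet v ∩ {u : α | G.dist x u = n' + 1 - 1}).Nonempty
          · obtain ⟨w, hwmem⟩ := hne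
            right
            refine ⟨w, ?_⟩
            ext w'
            simp only [Set.mem_inter_iff, Set.mem_setOf_eq, Set.mem_singleton_iff]
            constructor
            · rintro ⟨ha, hb⟩
              exact unique_parent hc hac hvd (show G.dist x w' = n' from hb)
                (show G.dist x w = n' from hwmem.2) ((ha : G.Adj v w').symm)
                ((hwmem.1 : G.Adj v w).symm)
            · rintro rfl; exact hwmem
          · left; exact Set.not_nonempty_iff_eq_empty.mp hne
      have hunion := Set.ncard_le_ncard hsplit
        (((hlf v).subset Set.inter_subset_left).union ((hlf v).subset Set.inter_subset_left))
      have := Set.ncard_union_le (G.neighborSet v ∩ {u : α | G.dist x u = n + 1})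
        (G.neighborSet v ∩ {u : α | G.dist x u = n - 1})
      rw [(hreg v).2] at hunion
      omega
    calc (δ - 1) * {v : α | G.dist x v = n}.ncard
        = ∑ _v ∈ S, (δ - 1) := by
          rw [Set.ncard_eq_toFinset_card _ hS]
          simp [Finset.sum_const, Nat.mul_comm]
          exact Or.inl rfl
      _ ≤ ∑ v ∈ S, (G.neighborSet v ∩ {u : α | G.dist x u = n + 1}).ncard :=
          Finset.sum_le_sum hterm
      _ ≤ (⋃ v ∈ S, (G.neighborSet v ∩ {u : α | G.dist x u = n + 1})).ncard :=
          le_ncard_biUnion S _ (fun v _ => (hlf v).subset Set.inter_subset_left) hdisj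
      _ ≤ {v : α | G.dist x v = n + 1}.ncard :=
          Set.ncard_le_ncard hsub (sphere_finite hc hlf x (n + 1))
  intro ℓ
  induction ℓ with
  | zero =>
    have hx : x ∈ {v : α | G.dist x v = 0} := by simp [SimpleGraph.dist_self]
    have := (Set.ncard_pos (sphere_finite hc hlf x 0)).mpr ⟨x, hx⟩
    simpa [Nat.one_le_iff_ne_zero, Nat.pos_iff_ne_zero] using this
  | succ n ih =>
    calc (δ - 1) ^ (n + 1) = (δ - 1) * (δ - 1) ^ n := by ring
      _ ≤ (δ - 1) * {v : α | G.dist x v = n}.ncard := Nat.mul_le_mul_left _ ih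
      _ ≤ {v : α | G.dist x v = n + 1}.ncard := key n

end FFAux
end TestD
section TestE
open SimpleGraph
namespace FFAux

variable {V : Type*} {G : SimpleGraph V} {W X : ℕ → Set V}

lemma X_disj_W
    (hrec : ∀ n, X (n + 1) =
      {v : V | ∃ u ∈ X n, v = u ∨ G.Adj u v} \ (⋃ k ∈ Finset.Icc 1 (n + 1), W k))
    (hdis : ∀ n, Disjoint (X n) (W (n + 1))) :
    ∀ n k, 1 ≤ k → k ≤ n + 1 → Disjoint (X n) (W k) := by
  intro n k hk1 hk2
  rcases Nat.lt_or_ge k (n + 1) with hlt | hge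
  · obtain ⟨n', rfl⟩ : ∃ n', n = n' + 1 := ⟨n - 1, by omega⟩
    rw [hrec n']
    rw [Set.disjoint_left]
    rintro v ⟨-, hv2⟩ hvw
    exact hv2 (Set.mem_biUnion (Finset.mem_Icc.mpr ⟨hk1, by omega⟩) hvw)
  · have : k = n + 1 := by omega
    subst this
    exact hdis n

lemma X_mono
    (hrec : ∀ n, X (n + 1) =
      {v : V | ∃ u ∈ X n, v = u ∨ G.Adj u v} \ (⋃ k ∈ Finset.Icc 1 (n + 1), W k))
    (hdis : ∀ n, Disjoint (X n) (W (n + 1))) :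
    ∀ {m n : ℕ}, m ≤ n → X m ⊆ X n := by
  have hstep : ∀ n, X n ⊆ X (n + 1) := by
    intro n v hv
    rw [hrec n]
    refine ⟨⟨v, hv, Or.inl rfl⟩, ?_⟩
    intro hmem
    simp only [Set.mem_iUnion] at hmem
    obtain ⟨k, hk, hvk⟩ := hmem
    simp only [Finset.mem_Icc] at hk
    exact Set.disjoint_left.mp (X_disj_W hrec hdis n k hk.1 hk.2) hv hvk
  intro m n hmn
  induction n with
  | zero => rw [Nat.le_zero.mp hmn]
  | succ n ih =>
    rcases Nat.lt_or_ge m (n + 1) with hlt | hge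
    · exact (ih (by omega)).trans (hstep n)
    · have : m = n + 1 := by omega
      subst this
      exact subset_rfl

lemma burn_lemma
    (hrec : ∀ n, X (n + 1) =
      {v : V | ∃ u ∈ X n, v = u ∨ G.Adj u v} \ (⋃ k ∈ Finset.Icc 1 (n + 1), W k))
    {x₀ y : V} (hx0 : x₀ ∈ X 0) (π : G.Walk x₀ y) :
    ∀ n, (∀ j, j ≤ n → ∀ k, 1 ≤ k → k ≤ j → π.getVert j ∉ W k) → π.getVert n ∈ X n := by
  intro n
  induction n with
  | zero => intro _; rw [Walk.getVert_zero]; exact hx0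
  | succ n ih =>
    intro hyp
    have hn : π.getVert n ∈ X n := ih (fun j hj k hk1 hk2 => hyp j (by omega) k hk1 hk2)
    rw [hrec n]
    constructor
    · refine ⟨π.getVert n, hn, ?_⟩
      rcases Nat.lt_or_ge n π.length with hlt | hge
      · exact Or.inr (π.adj_getVert_succ hlt)
      · rw [π.getVert_of_length_le hge, π.getVert_of_length_le (by omega)]
        exact Or.inl rfl
    · intro hmem
      simp only [Set.mem_iUnion] at hmem
      obtain ⟨k, hk, hvk⟩ := hmem
      simp only [Finset.mem_Icc] at hk
      exact hyp (n + 1) le_rfl k hk.1 hk.2 hvk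

lemma X_finite (hlf : G.LocallyFinite)
    (hrec : ∀ n, X (n + 1) =
      {v : V | ∃ u ∈ X n, v = u ∨ G.Adj u v} \ (⋃ k ∈ Finset.Icc 1 (n + 1), W k))
    (h0 : (X 0).Finite) : ∀ n, (X n).Finite := by
  intro n
  induction n with
  | zero => exact h0
  | succ n ih =>
    have hsub : X (n + 1) ⊆ ⋃ u ∈ X n, ({u} ∪ G.neighborSet u) := by
      rw [hrec n]
      rintro v ⟨⟨u, hu, hcase⟩, -⟩
      refine Set.mem_biUnion hu ?_
      rcases hcase with rfl | hadj
      · exact Or.inl rfl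
      · exact Or.inr hadj
    refine Set.Finite.subset (ih.biUnion fun u _ => ?_) hsub
    exact (Set.finite_singleton u).union (Set.toFinite _)

end FFAux
end TestE
section TestF
open Filter
namespace FFAux

lemma nat_div_ineq (k A : ℕ) (hA : 1 ≤ A) : k ≤ 4 * A + 2 * A * ((k - 1) / (2 * A)) := by
  have h := Nat.div_add_mod (k - 1) (2 * A)
  have h2 := Nat.mod_lt (k - 1) (show 0 < 2 * A by omega)
  omega

lemma geom_poly_sum_bound (d A : ℕ) (hA : 1 ≤ A) {b : ℝ} (hb : 2 ≤ b) :
    ∃ Z : ℝ, 0 ≤ Z ∧ ∀ s : Finset ℕ,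
      ∑ k ∈ s, (k : ℝ) ^ d * ((b ^ ((k - 1) / (2 * A))) : ℝ)⁻¹ ≤ Z := by
  have hb1 : (1 : ℝ) < b := by linarith
  have hb0 : (0 : ℝ) < b := by linarith
  set ρ : ℝ := b ^ (-(1 : ℝ) / (2 * A)) with hρdef
  have hρ0 : 0 ≤ ρ := Real.rpow_nonneg hb0.le _
  have hρ1 : ρ < 1 := by
    apply Real.rpow_lt_one_of_one_lt_of_neg hb1
    have : (0 : ℝ) < 2 * A := by positivity
    rw [div_neg_iff]
    right
    constructor <;> [linarith; exact this]
  have hsum : Summable (fun k : ℕ => (k : ℝ) ^ d * ρ ^ k) :=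
    summable_pow_mul_geometric_of_norm_lt_one d (by rwa [Real.norm_eq_abs, abs_of_nonneg hρ0])
  refine ⟨b ^ 2 * ∑' k : ℕ, (k : ℝ) ^ d * ρ ^ k,
    mul_nonneg (by positivity) (tsum_nonneg fun k => by positivity), fun s => ?_⟩
  have hterm : ∀ k : ℕ, ((b ^ ((k - 1) / (2 * A))) : ℝ)⁻¹ ≤ b ^ 2 * ρ ^ k := by
    intro k
    set p : ℕ := (k - 1) / (2 * A) with hpdef
    have hk4 : (k : ℝ) ≤ 4 * A + 2 * A * p := by
      have := nat_div_ineq k A hA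
      push_cast
      exact_mod_cast this
    have hexp : -(p : ℝ) ≤ 2 - (k : ℝ) / (2 * A) := by
      have h2A : (0 : ℝ) < 2 * A := by positivity
      have hdiv : (k : ℝ) / (2 * A) ≤ 2 + p := by
        rw [div_le_iff₀ h2A]
        nlinarith
      linarith
    have h1 : ((b ^ p : ℝ))⁻¹ = b ^ (-(p : ℝ)) := by
      rw [Real.rpow_neg hb0.le, Real.rpow_natCast]
    have h2 : b ^ ((2 : ℝ) - (k : ℝ) / (2 * A)) = b ^ 2 * ρ ^ k := by
      rw [Real.rpow_sub hb0]
      rw [hρdef, ← Real.rpow_natCast (b ^ (-(1 : ℝ) / (2 * A))) k, ← Real.rpow_mul hb0.le]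
      rw [div_eq_mul_inv, Real.rpow_two]
      ring_nf
      rw [← Real.rpow_neg hb0.le, ← Real.rpow_natCast b 2]
      congr 1
      ring
    calc ((b ^ p : ℝ))⁻¹ = b ^ (-(p : ℝ)) := h1
      _ ≤ b ^ ((2 : ℝ) - (k : ℝ) / (2 * A)) := by
          exact Real.rpow_le_rpow_left_iff hb1 |>.mpr hexp
      _ = b ^ 2 * ρ ^ k := h2
  calc ∑ k ∈ s, (k : ℝ) ^ d * ((b ^ ((k - 1) / (2 * A))) : ℝ)⁻¹
      ≤ ∑ k ∈ s, (k : ℝ) ^ d * (b ^ 2 * ρ ^ k) := by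
        refine Finset.sum_le_sum fun k _ => ?_
        exact mul_le_mul_of_nonneg_left (hterm k) (by positivity)
    _ = b ^ 2 * ∑ k ∈ s, (k : ℝ) ^ d * ρ ^ k := by
        rw [Finset.mul_sum]; congr 1; ext k; ring
    _ ≤ b ^ 2 * ∑' k : ℕ, (k : ℝ) ^ d * ρ ^ k := by
        refine mul_le_mul_of_nonneg_left ?_ (by positivity)
        exact Summable.sum_le_tsum s (fun k _ => by positivity) hsum

lemma exists_pow_beats {b c : ℝ} (hb : 2 ≤ b) (hc : 0 < c) (d m₀ : ℕ) :
    ∃ m : ℕ, m₀ ≤ m ∧ c * ((m : ℝ) + 1) ^ (d + 1) < b ^ m := by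
  have hb1 : (1 : ℝ) < b := by linarith
  have hb0 : (0 : ℝ) < b := by linarith
  have h := tendsto_pow_const_div_const_pow_of_one_lt (d + 1) hb1
  have hpos : (0 : ℝ) < 1 / (c * b + 1) := by positivity
  obtain ⟨n₀, hn₀⟩ := (eventually_atTop).mp (h.eventually (gt_mem_nhds hpos))
  refine ⟨max m₀ n₀, le_max_left _ _, ?_⟩
  set m := max m₀ n₀
  have hm1 : n₀ ≤ m + 1 := le_trans (le_max_right m₀ n₀) (Nat.le_succ m)
  have hlt := hn₀ (m + 1) hm1
  have hb' : (0 : ℝ) < b ^ (m + 1) := by positivity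
  rw [div_lt_iff₀ hb'] at hlt
  have hcb : 0 < c * b + 1 := by positivity
  have key : c * ((m : ℝ) + 1) ^ (d + 1) < c * (1 / (c * b + 1) * b ^ (m + 1)) := by
    apply mul_lt_mul_of_pos_left _ hc
    calc ((m : ℝ) + 1) ^ (d + 1) = (((m + 1 : ℕ) : ℝ)) ^ (d + 1) := by push_cast; ring
      _ < 1 / (c * b + 1) * b ^ (m + 1) := hlt
  refine key.trans_le ?_
  rw [pow_succ]
  have : c * (1 / (c * b + 1) * (b ^ m * b)) = b ^ m * (c * b / (c * b + 1)) := by ring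
  rw [this]
  have hle : c * b / (c * b + 1) ≤ 1 := by
    rw [div_le_one hcb]; linarith
  nlinarith [pow_pos hb0 m]

end FFAux
end TestF

section MainProof
open SimpleGraph

set_option maxHeartbeats 2000000 in
theorem no_polyContainment_of_regularTree_subgraph {V : Type u} (G : SimpleGraph V)
    (hconn : G.Connected) (hlf : G.LocallyFinite)
    (δ : ℕ) (hδ : 3 ≤ δ)
    (h : ∃ (H : G.Subgraph) (U : Type u) (T : SimpleGraph U),
      IsRegularTree T δ ∧ H.coe.Connected ∧ QuasiIsometric H.coe T) :
    ∀ d : ℕ, ¬ HasPolyContainment G d := by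
  classical
  intro d hPC
  obtain ⟨H, U, T, ⟨hUinf, hTtree, hTreg⟩, hHconn, f, lam, ε, K, hlam, hε, hK, hbounds, hcoarse⟩ := h
  obtain ⟨C, hC, hPC'⟩ := hPC
  have hTconn : T.Connected := hTtree.isConnected
  have hTac : T.IsAcyclic := hTtree.IsAcyclic
  have hTlf : ∀ v : U, (T.neighborSet v).Finite := fun v => (hTreg v).1
  -- local finiteness of the subgraph
  have hHlf : ∀ v : ↥H.verts, (H.coe.neighborSet v).Finite := by
    intro v
    have hfinG : (G.neighborSet ↑v).Finite := by
      letI := hlf (↑v : V); exact (G.neighborSet (↑v : V)).toFinite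
    have hsub : Subtype.val '' (H.coe.neighborSet v) ⊆ G.neighborSet ↑v := by
      rintro _ ⟨w, hw, rfl⟩
      exact ((H.coe_adj v w).mp hw).adj_sub
    exact Set.Finite.of_finite_image (hfinG.subset hsub) (Set.injOn_of_injective Subtype.val_injective)
  -- integer quasi-isometry constants
  set a : ℕ := ⌈lam⌉₊ with hadef
  set e : ℕ := ⌈ε⌉₊ with hedef
  set κ : ℕ := ⌈K⌉₊ with hκdef
  have ha1 : 1 ≤ a := Nat.one_le_iff_ne_zero.mpr (by
    intro h0
    have := Nat.ceil_eq_zero.mp h0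
    linarith)
  have hfup : ∀ x y : ↥H.verts, T.dist (f x) (f y) ≤ a * H.coe.dist x y + e := by
    intro x y
    have h1 := (hbounds x y).2
    have h2 : (lam : ℝ) ≤ a := Nat.le_ceil lam
    have h3 : (ε : ℝ) ≤ e := Nat.le_ceil ε
    have h4 : (0 : ℝ) ≤ (H.coe.dist x y : ℝ) := Nat.cast_nonneg _
    have : (T.dist (f x) (f y) : ℝ) ≤ (a : ℝ) * (H.coe.dist x y : ℝ) + (e : ℝ) := by nlinarith
    exact_mod_cast this
  have hfdown : ∀ x y : ↥H.verts, H.coe.dist x y ≤ a * T.dist (f x) (f y) + a * e := by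
    intro x y
    have h1 := (hbounds x y).1
    have hlam0 : (0 : ℝ) < lam := by linarith
    have h2 : (lam⁻¹ * (H.coe.dist x y : ℝ)) ≤ (T.dist (f x) (f y) : ℝ) + ε := by linarith
    have h3 : (H.coe.dist x y : ℝ) ≤ lam * ((T.dist (f x) (f y) : ℝ) + ε) := by
      have := mul_le_mul_of_nonneg_left h2 hlam0.le
      rwa [← mul_assoc, mul_inv_cancel₀ (ne_of_gt hlam0), one_mul] at this
    have h4 : (lam : ℝ) ≤ a := Nat.le_ceil lam
    have h5 : (ε : ℝ) ≤ e := Nat.le_ceil ε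
    have h6 : (0 : ℝ) ≤ (T.dist (f x) (f y) : ℝ) := Nat.cast_nonneg _
    have : (H.coe.dist x y : ℝ) ≤ (a : ℝ) * (T.dist (f x) (f y) : ℝ) + (a : ℝ) * (e : ℝ) := by
      nlinarith
    exact_mod_cast this
  -- coarse inverse
  have hgex : ∀ t : U, ∃ x : ↥H.verts, T.dist t (f x) ≤ κ := by
    intro t
    obtain ⟨x, hx⟩ := hcoarse t
    exact ⟨x, by exact_mod_cast hx.trans (Nat.le_ceil K)⟩
  choose g hg using hgex
  -- main constants
  set A : ℕ := a * (1 + 2 * κ) + a * e with hAdef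
  have hA1 : 1 ≤ A := by
    have : a * 1 ≤ a * (1 + 2 * κ) := Nat.mul_le_mul_left a (by omega)
    omega
  have hadj_img : ∀ {t t' : U}, T.Adj t t' → H.coe.dist (g t) (g t') ≤ A := by
    intro t t' hadj
    have h1 : T.dist (f (g t)) (f (g t')) ≤ 1 + 2 * κ := by
      have e1 : T.dist (f (g t)) (f (g t')) ≤ T.dist (f (g t)) t + T.dist t (f (g t')) :=
        hTconn.dist_triangle
      have e2 : T.dist t (f (g t')) ≤ T.dist t t' + T.dist t' (f (g t')) := hTconn.dist_triangle
      have e3 : T.dist (f (g t)) t = T.dist t (f (g t)) := SimpleGraph.dist_comm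
      have e4 := hg t
      have e5 := hg t'
      have e6 : T.dist t t' = 1 := SimpleGraph.dist_eq_one_iff_adj.mpr hadj
      omega
    have h2 := hfdown (g t) (g t')
    have : a * T.dist (f (g t)) (f (g t')) ≤ a * (1 + 2 * κ) := Nat.mul_le_mul_left a h1
    omega
  set D : ℕ := 2 * κ + (a * (2 * A) + e) with hDdef
  have hanchor : ∀ (w : ↥H.verts) (t t' : U), H.coe.dist w (g t) ≤ A →
      H.coe.dist w (g t') ≤ A → T.dist t t' ≤ D := by
    intro w t t' h1 h2
    have hv : H.coe.dist (g t) (g t') ≤ 2 * A := by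
      have e7 : H.coe.dist (g t) (g t') ≤ H.coe.dist (g t) w + H.coe.dist w (g t') :=
        hHconn.dist_triangle
      have e8 : H.coe.dist (g t) w = H.coe.dist w (g t) := SimpleGraph.dist_comm
      omega
    have hq : T.dist (f (g t)) (f (g t')) ≤ a * (2 * A) + e := by
      have h6 := hfup (g t) (g t')
      have h7 : a * H.coe.dist (g t) (g t') ≤ a * (2 * A) := Nat.mul_le_mul_left a hv
      omega
    have hfin : T.dist t t' ≤ 2 * κ + (a * (2 * A) + e) := by
      have e1 : T.dist t t' ≤ T.dist t (f (g t)) + T.dist (f (g t)) t' := hTconn.dist_triangle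
      have e2 : T.dist (f (g t)) t' ≤ T.dist (f (g t)) (f (g t')) + T.dist (f (g t')) t' :=
        hTconn.dist_triangle
      have e3 := hg t
      have e4 : T.dist (f (g t')) t' = T.dist t' (f (g t')) := SimpleGraph.dist_comm
      have e5 := hg t'
      omega
    rw [hDdef]
    exact hfin
  set β : ℕ := δ - 1 with hβdef
  have hβ2 : 2 ≤ β := by omega
  have hβR : (2 : ℝ) ≤ (β : ℝ) := by exact_mod_cast hβ2
  have hβR1 : (1 : ℝ) < (β : ℝ) := by linarith
  have hβR0 : (0 : ℝ) < (β : ℝ) := by linarith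
  set E₁ : ℕ := (D + 1) * (2 * β ^ D) with hE₁def
  set E₂ : ℕ := 2 * E₁ with hE₂def
  have hE₂pos : 0 < E₂ := by
    have : 0 < β ^ D := Nat.pow_pos (by omega)
    have : 0 < E₁ := by positivity
    omega
  have hE₂R : (0 : ℝ) < (E₂ : ℝ) := by exact_mod_cast hE₂pos
  -- summability constant
  obtain ⟨Z, hZ0, hZ⟩ := FFAux.geom_poly_sum_bound d A hA1 hβR
  -- choose the scale s
  obtain ⟨s, hs⟩ := pow_unbounded_of_one_lt (R := ℝ) (2 * C * E₂ * Z) hβR1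
  set R : ℕ := A * (2 * s + 2) with hRdef
  -- base point
  have : Nonempty U := inferInstance
  set t₀ : U := Classical.arbitrary U with ht₀def
  set x₀' : ↥H.verts := g t₀ with hx₀'def
  set x₀V : V := (x₀' : V) with hx₀Vdef
  -- initial fire
  set X₀ : Set V := Subtype.val '' {z : ↥H.verts | H.coe.dist x₀' z ≤ R} with hX₀def
  have hX₀fin : X₀.Finite := (FFAux.ball_finite hHconn hHlf x₀' R).image _
  obtain ⟨W, X, hX0, hWcard, hrec, hdis, T₁, hT₁pos, hstab⟩ := hPC' X₀ hX₀fin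
  have hx₀X0 : x₀V ∈ X 0 := by
    rw [hX0]
    exact ⟨x₀', by simp [SimpleGraph.dist_self], rfl⟩
  have hXfin : ∀ n, (X n).Finite := FFAux.X_finite hlf hrec (by rw [hX0]; exact hX₀fin)
  -- bound on H-distances within the stable set
  have hMex : ∃ M : ℕ, ∀ z : ↥H.verts, (z : V) ∈ X T₁ → H.coe.dist x₀' z ≤ M := by
    have hfin : {n : ℕ | ∃ z : ↥H.verts, (z : V) ∈ X T₁ ∧ n = H.coe.dist x₀' z}.Finite := by
      have : {n : ℕ | ∃ z : ↥H.verts, (z : V) ∈ X T₁ ∧ n = H.coe.dist x₀' z} ⊆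
          (fun z : ↥H.verts => H.coe.dist x₀' z) '' (Subtype.val ⁻¹' X T₁) := by
        rintro n ⟨z, hz, rfl⟩
        exact ⟨z, hz, rfl⟩
      exact (((hXfin T₁).preimage (Set.injOn_of_injective Subtype.val_injective)).image _).subset
        this
    obtain ⟨M, hM⟩ := hfin.bddAbove
    exact ⟨M, fun z hz => hM ⟨z, hz, rfl⟩⟩
  obtain ⟨M, hM⟩ := hMex
  -- choose the sphere radius m
  have hcpos : (0 : ℝ) < 2 * C * E₂ * ((A + T₁ + 2 : ℕ) : ℝ) ^ (d + 1) := by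
    have : (0 : ℝ) < ((A + T₁ + 2 : ℕ) : ℝ) := by exact_mod_cast (by omega : 0 < A + T₁ + 2)
    positivity
  obtain ⟨m, hm₁, hm₂⟩ := FFAux.exists_pow_beats hβR hcpos d (a * (M + 1) + 2 * κ + e)
  set N : ℕ := A * m + T₁ + 2 with hNdef
  have hmN : 2 * C * E₂ * ((N : ℕ) : ℝ) ^ (d + 1) < (β : ℝ) ^ m := by
    have h0 : (N : ℕ) ≤ (A + T₁ + 2) * (m + 1) := by
      rw [hNdef]
      nlinarith [Nat.zero_le (T₁ * m), Nat.zero_le (2 * m), Nat.zero_le A]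
    have hNle' : ((N : ℕ) : ℝ) ^ (d + 1) ≤
        ((A + T₁ + 2 : ℕ) : ℝ) ^ (d + 1) * ((m : ℝ) + 1) ^ (d + 1) := by
      calc ((N : ℕ) : ℝ) ^ (d + 1) ≤ (((A + T₁ + 2) * (m + 1) : ℕ) : ℝ) ^ (d + 1) := by
            apply pow_le_pow_left₀ (by positivity)
            exact_mod_cast h0
        _ = ((A + T₁ + 2 : ℕ) : ℝ) ^ (d + 1) * ((m : ℝ) + 1) ^ (d + 1) := by
            push_cast
            rw [mul_pow]
    calc 2 * C * (E₂ : ℝ) * ((N : ℕ) : ℝ) ^ (d + 1)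
        ≤ 2 * C * (E₂ : ℝ) * (((A + T₁ + 2 : ℕ) : ℝ) ^ (d + 1) * ((m : ℝ) + 1) ^ (d + 1)) := by
          apply mul_le_mul_of_nonneg_left hNle' (by positivity)
      _ = (2 * C * (E₂ : ℝ) * ((A + T₁ + 2 : ℕ) : ℝ) ^ (d + 1)) * ((m : ℝ) + 1) ^ (d + 1) := by
          ring
      _ < (β : ℝ) ^ m := hm₂
  -- the union of all walls placed up to time N
  clear_value a e κ A D β E₁ E₂ R N
  set S : Set V := ⋃ k ∈ Finset.Icc 1 N, W k with hSdef
  have hWsubS : ∀ k, 1 ≤ k → k ≤ N → W k ⊆ S := by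
    intro k h1 h2
    exact Set.subset_biUnion_of_mem (Finset.mem_Icc.mpr ⟨h1, h2⟩)
  have hx₀S : x₀V ∉ S := by
    intro hmem
    rw [hSdef] at hmem
    simp only [Set.mem_iUnion] at hmem
    obtain ⟨k, hk, hxk⟩ := hmem
    simp only [Finset.mem_Icc] at hk
    have hd := FFAux.X_disj_W hrec hdis (k - 1) k hk.1 (by omega)
    have hx : x₀V ∈ X (k - 1) := FFAux.X_mono hrec hdis (Nat.zero_le _) hx₀X0
    exact Set.disjoint_left.mp hd hx hxk
  -- the assignment of a wall vertex and tree anchor to each sphere point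
  have hassign : ∀ u : U, ∃ (k : ℕ) (w : V) (t : U), T.dist t₀ u = m →
      (1 ≤ k ∧ k ≤ N) ∧ w ∈ W k ∧
      (∃ hw : w ∈ H.verts, H.coe.dist ⟨w, hw⟩ (g t) ≤ A) ∧
      k ≤ A * T.dist t₀ t + 1 ∧ 2 * s ≤ T.dist t₀ t ∧
      T.dist t₀ t ≤ m ∧ T.dist t u = m - T.dist t₀ t := by
    intro u
    by_cases hu : T.dist t₀ u = m
    swap
    · exact ⟨1, x₀V, t₀, fun h => absurd h hu⟩
    obtain ⟨p, hpl⟩ := hTconn.exists_walk_length_eq_dist t₀ u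
    have hplm : p.length = m := by rw [hpl, hu]
    -- build the image walk in H along the tree geodesic
    have hbuild : ∀ j : ℕ, j ≤ p.length → ∃ π : H.coe.Walk x₀' (g (p.getVert j)),
        π.length ≤ A * j ∧ ∀ i, i ≤ π.length → ∃ j', j' ≤ j ∧
          H.coe.dist (π.getVert i) (g (p.getVert j')) ≤ A ∧ i ≤ A * j' := by
      intro j
      induction j with
      | zero =>
        intro _
        refine ⟨Walk.nil.copy rfl (by rw [p.getVert_zero]), by simp, ?_⟩
        intro i hi
        simp only [Walk.length_copy, Walk.length_nil, Nat.le_zero] at hi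
        subst hi
        refine ⟨0, le_rfl, ?_, by omega⟩
        have hgv : (Walk.nil.copy rfl (by rw [p.getVert_zero]) :
            H.coe.Walk x₀' (g (p.getVert 0))).getVert 0 = x₀' := Walk.getVert_zero _
        rw [hgv, p.getVert_zero]
        simp [SimpleGraph.dist_self, hx₀'def]
      | succ j ih =>
        intro hj
        obtain ⟨π, hπl, hπp⟩ := ih (by omega)
        obtain ⟨σ, hσ⟩ := hHconn.exists_walk_length_eq_dist (g (p.getVert j)) (g (p.getVert (j + 1)))
        have hσA : σ.length ≤ A := by
          rw [hσ]
          exact hadj_img (p.adj_getVert_succ (by omega))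
        refine ⟨π.append σ, ?_, ?_⟩
        · rw [Walk.length_append]
          have : A * j + A = A * (j + 1) := by ring
          omega
        · intro i hi
          rw [Walk.length_append] at hi
          rcases Nat.lt_or_ge i π.length with hlt | hge
          · obtain ⟨j', h1, h2, h3⟩ := hπp i hlt.le
            refine ⟨j', by omega, ?_, h3⟩
            rw [Walk.getVert_append, if_pos hlt]
            exact h2
          · refine ⟨j + 1, le_rfl, ?_, by
              have hAj : A * j + A = A * (j + 1) := by ring
              omega⟩
            rw [Walk.getVert_append, if_neg (not_lt.mpr hge)]
            exact (FFAux.dist_getVert_end_le σ (i - π.length)).trans (by omega)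
    obtain ⟨πH, hπHl, hπHp⟩ := hbuild p.length le_rfl
    set L : ℕ := πH.length with hLdef
    have hLAm : L ≤ A * m := by rw [hLdef]; rw [hplm] at hπHl; exact hπHl
    -- map to G
    set πG : G.Walk (↑x₀') ↑(g (p.getVert p.length)) := πH.map H.hom with hπGdef
    have hGV : ∀ i, πG.getVert i = ↑(πH.getVert i) := fun i => FFAux.getVert_map H.hom πH i
    have hGL : πG.length = L := Walk.length_map _ _
    have hup : p.getVert p.length = u := p.getVert_length
    -- case analysis: the walk must hit S
    by_cases hnohit : ∀ i, i ≤ L → (↑(πH.getVert i) : V) ∉ S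
    · exfalso
      have hburn : πG.getVert (N - 1) ∈ X (N - 1) := by
        refine FFAux.burn_lemma hrec hx₀X0 πG (N - 1) ?_
        intro j hj k hk1 hk2
        rcases Nat.lt_or_ge L j with hLj | hjL
        · have : πG.getVert j = πG.getVert L := by
            rw [Walk.getVert_of_length_le _ (by omega : πG.length ≤ j),
              Walk.getVert_of_length_le _ (by rw [hGL] : πG.length ≤ L)]
          rw [this, hGV L]
          intro hmem
          exact hnohit L le_rfl (hWsubS k hk1 (by omega) hmem)
        · rw [hGV j]
          intro hmem
          exact hnohit j hjL (hWsubS k hk1 (by omega) hmem)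
      have hNT : T₁ ≤ N - 1 := by omega
      rw [hstab (N - 1) hNT] at hburn
      have hend : πG.getVert (N - 1) = ↑(g u) := by
        rw [Walk.getVert_of_length_le _ (by omega : πG.length ≤ N - 1)]
        rw [hup]
      rw [hend] at hburn
      have hMle : H.coe.dist x₀' (g u) ≤ M := hM (g u) hburn
      -- the tree distance forces the H-distance to be large
      have e1 : T.dist t₀ u ≤ T.dist t₀ (f (g t₀)) + T.dist (f (g t₀)) u := hTconn.dist_triangle
      have e2 : T.dist (f (g t₀)) u ≤ T.dist (f (g t₀)) (f (g u)) + T.dist (f (g u)) u :=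
        hTconn.dist_triangle
      have e3 := hfup (g t₀) (g u)
      have e4 := hg t₀
      have e5 : T.dist (f (g u)) u = T.dist u (f (g u)) := SimpleGraph.dist_comm
      have e6 := hg u
      have e7 : a * H.coe.dist (g t₀) (g u) ≤ a * M := Nat.mul_le_mul_left a hMle
      have e8 : a * (M + 1) = a * M + a := by ring
      omega
    · push_neg at hnohit
      obtain ⟨i₁, hi₁L, hi₁S⟩ := hnohit
      -- least hitting index
      have hPex : ∃ i, i ≤ L ∧ (↑(πH.getVert i) : V) ∈ S := ⟨i₁, hi₁L, hi₁S⟩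
      have hspecP := Nat.find_spec hPex
      set i₀ : ℕ := Nat.find hPex with hi₀def
      obtain ⟨hi₀L, hi₀S⟩ := hspecP
      have hi₀min : ∀ i, i < i₀ → (↑(πH.getVert i) : V) ∉ S := by
        intro i hi hmem
        exact Nat.find_min hPex hi ⟨by omega, hmem⟩
      have hi₀pos : 1 ≤ i₀ := by
        rcases Nat.eq_zero_or_pos i₀ with h0 | h1
        · exfalso
          rw [h0] at hi₀S
          rw [Walk.getVert_zero] at hi₀S
          exact hx₀S hi₀S
        · exact h1
      set w : V := ↑(πH.getVert i₀) with hwdef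
      -- least wall index containing w
      have hQex : ∃ k, 1 ≤ k ∧ k ≤ N ∧ w ∈ W k := by
        rw [hSdef] at hi₀S
        simp only [Set.mem_iUnion] at hi₀S
        obtain ⟨k, hk, hmem⟩ := hi₀S
        simp only [Finset.mem_Icc] at hk
        exact ⟨k, hk.1, hk.2, hmem⟩
      have hspecQ := Nat.find_spec hQex
      set k₀ : ℕ := Nat.find hQex with hk₀def
      obtain ⟨hk₀1, hk₀N, hk₀W⟩ := hspecQ
      -- the wall must be placed before the fire arrives
      have hk₀le : k₀ ≤ i₀ + 1 := by
        by_contra hgt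
        push_neg at hgt
        have hprefix : πG.getVert (i₀ - 1) ∈ X (i₀ - 1) := by
          refine FFAux.burn_lemma hrec hx₀X0 πG (i₀ - 1) ?_
          intro j hj k hk1 hk2
          rw [hGV j]
          intro hmem
          exact hi₀min j (by omega) (hWsubS k hk1 (by omega) hmem)
        have hwX : w ∈ X i₀ := by
          have hrw := hrec (i₀ - 1)
          rw [show i₀ - 1 + 1 = i₀ by omega] at hrw
          rw [hrw]
          constructor
          · refine ⟨πG.getVert (i₀ - 1), hprefix, ?_⟩
            have hadj : G.Adj (πG.getVert (i₀ - 1)) (πG.getVert i₀) := by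
              have := πG.adj_getVert_succ (i := i₀ - 1) (by omega)
              rwa [show i₀ - 1 + 1 = i₀ by omega] at this
            right
            rw [hGV i₀] at hadj
            exact hadj
          · intro hmem
            simp only [Set.mem_iUnion] at hmem
            obtain ⟨k, hk, hmem⟩ := hmem
            simp only [Finset.mem_Icc] at hk
            have hkN2 : k ≤ N := by omega
            have : k₀ ≤ k := Nat.find_min' hQex ⟨hk.1, hkN2, hmem⟩
            omega
        have hd := FFAux.X_disj_W hrec hdis (k₀ - 1) k₀ hk₀1 (by omega)
        have : w ∈ X (k₀ - 1) := FFAux.X_mono hrec hdis (by omega : i₀ ≤ k₀ - 1) hwX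
        exact Set.disjoint_left.mp hd this hk₀W
      -- anchor data
      obtain ⟨j', hj'le, hj'dist, hj'pos⟩ := hπHp i₀ hi₀L
      set t : U := p.getVert j' with htdef
      have hdepth : T.dist t₀ t = j' ∧ T.dist t u = m - j' := by
        have := FFAux.getVert_dist_eq hTconn p hpl (by omega : j' ≤ p.length)
        rw [htdef]
        constructor
        · rw [this.1]
        · rw [this.2, hplm]
      -- w is not in the initial ball
      have hwX₀ : w ∉ X₀ := by
        intro hmem
        have hd := FFAux.X_disj_W hrec hdis (k₀ - 1) k₀ hk₀1 (by omega)
        have : w ∈ X (k₀ - 1) := FFAux.X_mono hrec hdis (Nat.zero_le _) (by rw [hX0]; exact hmem)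
        exact Set.disjoint_left.mp hd this hk₀W
      have hdistR : R < H.coe.dist x₀' (πH.getVert i₀) := by
        by_contra hle
        push_neg at hle
        exact hwX₀ ⟨πH.getVert i₀, hle, rfl⟩
      have hdistle : H.coe.dist x₀' (πH.getVert i₀) ≤ i₀ := FFAux.dist_getVert_le πH i₀
      have hj's : 2 * s + 2 < j' := by
        have h1 : A * (2 * s + 2) < A * j' := by
          calc A * (2 * s + 2) = R := by rw [hRdef]
            _ < H.coe.dist x₀' (πH.getVert i₀) := hdistR
            _ ≤ i₀ := hdistle
            _ ≤ A * j' := hj'pos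
        exact Nat.lt_of_mul_lt_mul_left h1
      refine ⟨k₀, w, t, fun _ => ⟨⟨hk₀1, hk₀N⟩, hk₀W, ?_, ?_, ?_, ?_, ?_⟩⟩
      · refine ⟨(πH.getVert i₀).2, ?_⟩
        have : (⟨w, (πH.getVert i₀).2⟩ : ↥H.verts) = πH.getVert i₀ := Subtype.ext rfl
        rw [this]
        exact hj'dist
      · rw [hdepth.1]; omega
      · rw [hdepth.1]; omega
      · rw [hdepth.1]; omega
      · rw [hdepth.1]; exact hdepth.2
  -- choose the assignment functions
  choose Φk Φw Φt hΦ using hassign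
  -- the sphere of radius m in the tree
  set Sph : Set U := {u : U | T.dist t₀ u = m} with hSphdef
  have hSphFin : Sph.Finite := FFAux.sphere_finite hTconn hTlf t₀ m
  have hSphlow : β ^ m ≤ Sph.ncard := by
    have := FFAux.sphere_ncard_ge hTconn hTac hTreg hδ t₀ m
    rwa [← hβdef] at this
  -- wall finsets
  have hWfin : ∀ k, 1 ≤ k → (W k).Finite := fun k hk => (hWcard k hk).1
  set J : ℕ → ℕ := fun k => max ((k - 1) / A) (2 * s) with hJdef
  set fib : ℕ → V → Set U := fun k w => {u : U | T.dist t₀ u = m ∧ Φk u = k ∧ Φw u = w}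
    with hfibdef
  -- the fiber counting bound
  have hfiber : ∀ k w', 1 ≤ k → (fib k w').ncard ≤ E₂ * β ^ (m - J k) := by
    intro k w' hk1
    rcases Set.eq_empty_or_nonempty (fib k w') with hemp | ⟨u₁, hu₁⟩
    · rw [hemp]; simp
    have hu₁m : T.dist t₀ u₁ = m := hu₁.1
    set tstar : U := Φt u₁ with htstardef
    obtain ⟨-, -, ⟨hw₁, hanch₁⟩, -, -, -, -⟩ := hΦ u₁ hu₁m
    -- all anchors lie in a ball around tstar with controlled depth
    have hanchors : ∀ u ∈ fib k w', T.dist tstar (Φt u) ≤ D ∧ J k ≤ T.dist t₀ (Φt u) ∧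
        T.dist t₀ (Φt u) ≤ m ∧ T.dist (Φt u) u = m - T.dist t₀ (Φt u) := by
      intro u hu
      obtain ⟨hum, huk, huw⟩ := hu
      obtain ⟨-, -, ⟨hw₂, hanch₂⟩, hP4, hP5, hP6, hP7⟩ := hΦ u hum
      have hww : Φw u₁ = Φw u := by rw [huw, hu₁.2.2]
      have hanch₁' : H.coe.dist ⟨Φw u, hww ▸ hw₁⟩ (g tstar) ≤ A := by
        have : (⟨Φw u, hww ▸ hw₁⟩ : ↥H.verts) = ⟨Φw u₁, hw₁⟩ := by
          apply Subtype.ext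
          simp [hww.symm]
        rw [this]
        exact hanch₁
      have hdist : T.dist tstar (Φt u) ≤ D :=
        hanchor ⟨Φw u, hww ▸ hw₁⟩ tstar (Φt u) hanch₁' (by
          have : (⟨Φw u, hww ▸ hw₁⟩ : ↥H.verts) = ⟨Φw u, hw₂⟩ := Subtype.ext rfl
          rw [this]; exact hanch₂)
      refine ⟨hdist, ?_, hP6, hP7⟩
      rw [hJdef]
      have hq : (k - 1) / A ≤ T.dist t₀ (Φt u) := by
        have h1 : k - 1 ≤ A * T.dist t₀ (Φt u) := by
          have := huk ▸ hP4
          omega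
        calc (k - 1) / A ≤ (A * T.dist t₀ (Φt u)) / A := Nat.div_le_div_right h1
          _ = T.dist t₀ (Φt u) := Nat.mul_div_cancel_left _ (by omega)
      exact max_le hq hP5
    -- the anchor set
    set anch : Set U := {t : U | T.dist tstar t ≤ D ∧ J k ≤ T.dist t₀ t ∧ T.dist t₀ t ≤ m}
      with hanchdef
    have hanchfin : anch.Finite :=
      (FFAux.ball_finite hTconn hTlf tstar D).subset (fun t ht => ht.1)
    have hanchcard : anch.ncard ≤ E₁ := by
      have hsub : anch ⊆ {v : U | T.dist tstar v ≤ D} := fun t ht => ht.1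
      calc anch.ncard ≤ {v : U | T.dist tstar v ≤ D}.ncard :=
            Set.ncard_le_ncard hsub (FFAux.ball_finite hTconn hTlf tstar D)
        _ ≤ (D + 1) * (2 * (δ - 1) ^ D) := FFAux.ball_ncard_le hTconn hTreg (by omega) tstar D
        _ = E₁ := by rw [hE₁def, hβdef]
    -- cover the fiber by spheres around anchors
    have hcover : fib k w' ⊆ ⋃ t ∈ hanchfin.toFinset, {u : U | T.dist t u = m - T.dist t₀ t} := by
      intro u hu
      obtain ⟨h1, h2, h3, h4⟩ := hanchors u hu
      have hmem : Φt u ∈ hanchfin.toFinset := (Set.Finite.mem_toFinset hanchfin).mpr ⟨h1, h2, h3⟩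
      exact Set.mem_iUnion.mpr ⟨Φt u, Set.mem_iUnion.mpr ⟨hmem, h4⟩⟩
    calc (fib k w').ncard
        ≤ (⋃ t ∈ hanchfin.toFinset, {u : U | T.dist t u = m - T.dist t₀ t}).ncard := by
          refine Set.ncard_le_ncard hcover ?_
          exact Set.Finite.biUnion hanchfin.toFinset.finite_toSet
            (fun t _ => FFAux.sphere_finite hTconn hTlf t _)
      _ ≤ ∑ t ∈ hanchfin.toFinset, {u : U | T.dist t u = m - T.dist t₀ t}.ncard :=
          FFAux.ncard_biUnion_le _ _
      _ ≤ ∑ t ∈ hanchfin.toFinset, 2 * β ^ (m - J k) := by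
          refine Finset.sum_le_sum fun t ht => ?_
          rw [Set.Finite.mem_toFinset] at ht
          calc {u : U | T.dist t u = m - T.dist t₀ t}.ncard
              ≤ 2 * (δ - 1) ^ (m - T.dist t₀ t) :=
                FFAux.sphere_ncard_le hTconn hTreg (by omega) t _
            _ ≤ 2 * β ^ (m - J k) := by
                rw [← hβdef]
                exact Nat.mul_le_mul_left 2 (Nat.pow_le_pow_right (by omega)
                  (Nat.sub_le_sub_left ht.2.1 m))
      _ = hanchfin.toFinset.card * (2 * β ^ (m - J k)) := by
          rw [Finset.sum_const, smul_eq_mul]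
      _ ≤ E₁ * (2 * β ^ (m - J k)) := by
          have : hanchfin.toFinset.card = anch.ncard := (Set.ncard_eq_toFinset_card _ _).symm
          rw [this]
          exact Nat.mul_le_mul_right _ hanchcard
      _ = E₂ * β ^ (m - J k) := by rw [hE₂def]; ring
  -- cover the sphere by fibers
  set WF : ℕ → Finset V := fun k => if h : (W k).Finite then h.toFinset else ∅ with hWFdef
  have hWFmem : ∀ k, 1 ≤ k → ∀ w', w' ∈ W k ↔ w' ∈ WF k := by
    intro k hk w'
    rw [hWFdef]
    simp only [dif_pos (hWfin k hk)]
    exact (Set.Finite.mem_toFinset _).symm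
  have hSphcover : Sph ⊆ ⋃ k ∈ Finset.Icc 1 N, ⋃ w' ∈ WF k, fib k w' := by
    intro u hu
    have hum : T.dist t₀ u = m := hu
    obtain ⟨⟨h1, h2⟩, hW, -, -, -, -, -⟩ := hΦ u hum
    refine Set.mem_biUnion (Finset.mem_Icc.mpr ⟨h1, h2⟩) ?_
    refine Set.mem_biUnion ((hWFmem (Φk u) h1 (Φw u)).mp hW) ?_
    exact ⟨hum, rfl, rfl⟩
  -- count: natural number inequality
  have hcount : Sph.ncard ≤ ∑ k ∈ Finset.Icc 1 N, (WF k).card * (E₂ * β ^ (m - J k)) := by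
    calc Sph.ncard ≤ (⋃ k ∈ Finset.Icc 1 N, ⋃ w' ∈ WF k, fib k w').ncard := by
          refine Set.ncard_le_ncard hSphcover ?_
          refine Set.Finite.biUnion (Finset.Icc 1 N).finite_toSet fun k _ => ?_
          refine Set.Finite.biUnion (WF k).finite_toSet fun w' _ => ?_
          exact hSphFin.subset (fun u hu => hu.1)
      _ ≤ ∑ k ∈ Finset.Icc 1 N, (⋃ w' ∈ WF k, fib k w').ncard := FFAux.ncard_biUnion_le _ _
      _ ≤ ∑ k ∈ Finset.Icc 1 N, ∑ w' ∈ WF k, (fib k w').ncard := by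
          refine Finset.sum_le_sum fun k _ => ?_
          exact FFAux.ncard_biUnion_le _ _
      _ ≤ ∑ k ∈ Finset.Icc 1 N, (WF k).card * (E₂ * β ^ (m - J k)) := by
          refine Finset.sum_le_sum fun k hk => ?_
          rw [Finset.mem_Icc] at hk
          calc ∑ w' ∈ WF k, (fib k w').ncard ≤ ∑ _w' ∈ WF k, E₂ * β ^ (m - J k) :=
                Finset.sum_le_sum fun w' _ => hfiber k w' hk.1
            _ = (WF k).card * (E₂ * β ^ (m - J k)) := by rw [Finset.sum_const, smul_eq_mul]
  -- pass to the reals and derive the contradiction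
  have hWFcard : ∀ k, 1 ≤ k → ((WF k).card : ℝ) ≤ C * (k : ℝ) ^ d := by
    intro k hk
    have h1 := (hWcard k hk).2
    have h2 : (WF k).card = (W k).ncard := by
      rw [hWFdef]
      simp only [dif_pos (hWfin k hk)]
      exact (Set.ncard_eq_toFinset_card _ _).symm
    rw [h2]
    exact h1
  have hJlow : ∀ k, (k - 1) / (2 * A) + s ≤ J k := by
    intro k
    rw [hJdef]
    have h1 : (k - 1) / A / 2 = (k - 1) / (2 * A) := by
      rw [Nat.div_div_eq_div_mul, Nat.mul_comm]
    have h2 : ((k - 1) / A + 2 * s) / 2 ≤ max ((k - 1) / A) (2 * s) := by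
      calc ((k - 1) / A + 2 * s) / 2 ≤ (max ((k - 1) / A) (2 * s) * 2) / 2 := by
            apply Nat.div_le_div_right
            have ha := Nat.le_max_left ((k - 1) / A) (2 * s)
            have hb := Nat.le_max_right ((k - 1) / A) (2 * s)
            omega
        _ = max ((k - 1) / A) (2 * s) := Nat.mul_div_cancel _ (by omega)
    have h3 : (k - 1) / (2 * A) + s ≤ ((k - 1) / A + 2 * s) / 2 := by
      rw [← h1]
      omega
    exact h3.trans h2
  -- real-valued estimate of each term
  have hterm : ∀ k, 1 ≤ k → k ≤ N → ((WF k).card * (E₂ * β ^ (m - J k)) : ℝ) ≤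
      C * (E₂ : ℝ) * (β : ℝ) ^ m * ((β : ℝ) ^ s)⁻¹ *
        ((k : ℝ) ^ d * (((β : ℝ) ^ ((k - 1) / (2 * A)))⁻¹)) + C * (E₂ : ℝ) * (N : ℝ) ^ d := by
    intro k hk hkN
    have hWFk := hWFcard k hk
    have hkd0 : (0 : ℝ) ≤ (k : ℝ) ^ d := by positivity
    have hNd0 : (0 : ℝ) ≤ C * (E₂ : ℝ) * (N : ℝ) ^ d := by positivity
    have hfirst0 : (0 : ℝ) ≤ C * (E₂ : ℝ) * (β : ℝ) ^ m * ((β : ℝ) ^ s)⁻¹ *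
        ((k : ℝ) ^ d * (((β : ℝ) ^ ((k - 1) / (2 * A)))⁻¹)) := by positivity
    have hbase : ((WF k).card * (E₂ * β ^ (m - J k)) : ℝ) ≤
        C * (k : ℝ) ^ d * ((E₂ : ℝ) * (β : ℝ) ^ (m - J k)) := by
      push_cast
      apply mul_le_mul_of_nonneg_right hWFk (by positivity)
    rcases le_or_gt (J k) m with hJm | hJm
    · -- J k ≤ m : geometric decay
      have hJk : (β : ℝ) ^ ((k - 1) / (2 * A)) * (β : ℝ) ^ s ≤ (β : ℝ) ^ (J k) := by
        rw [← pow_add]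
        exact pow_le_pow_right₀ (by linarith) (hJlow k)
      have hpos2 : (0 : ℝ) < (β : ℝ) ^ ((k - 1) / (2 * A)) * (β : ℝ) ^ s := by positivity
      have hexact' : ((β : ℝ) ^ (m - J k)) * (β : ℝ) ^ (J k) = (β : ℝ) ^ m := by
        rw [← pow_add]
        congr 1
        omega
      have hinv : ((β : ℝ) ^ (J k))⁻¹ ≤ (((β : ℝ) ^ ((k - 1) / (2 * A)))⁻¹ * ((β : ℝ) ^ s)⁻¹) := by
        rw [← mul_inv]
        exact inv_anti₀ hpos2 hJk
      have hpow : ((β : ℝ) ^ (m - J k)) ≤ (β : ℝ) ^ m *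
          ((((β : ℝ) ^ ((k - 1) / (2 * A)))⁻¹) * ((β : ℝ) ^ s)⁻¹) := by
        have h1 : ((β : ℝ) ^ (m - J k)) = (β : ℝ) ^ m * ((β : ℝ) ^ (J k))⁻¹ := by
          rw [← hexact']
          field_simp
        rw [h1]
        exact mul_le_mul_of_nonneg_left hinv (by positivity)
      refine le_trans hbase (le_trans ?_ (le_add_of_nonneg_right hNd0))
      calc C * (k : ℝ) ^ d * ((E₂ : ℝ) * (β : ℝ) ^ (m - J k))
          ≤ C * (k : ℝ) ^ d * ((E₂ : ℝ) * ((β : ℝ) ^ m *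
            ((((β : ℝ) ^ ((k - 1) / (2 * A)))⁻¹) * ((β : ℝ) ^ s)⁻¹))) := by
            apply mul_le_mul_of_nonneg_left _ (by positivity)
            exact mul_le_mul_of_nonneg_left hpow (by positivity)
        _ = C * (E₂ : ℝ) * (β : ℝ) ^ m * ((β : ℝ) ^ s)⁻¹ *
            ((k : ℝ) ^ d * (((β : ℝ) ^ ((k - 1) / (2 * A)))⁻¹)) := by ring
    · -- J k > m : crude bound
      have hm0 : m - J k = 0 := by omega
      refine le_trans hbase (le_trans ?_ (le_add_of_nonneg_left hfirst0))
      rw [hm0, pow_zero]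
      have hkN' : ((k : ℝ)) ^ d ≤ ((N : ℝ)) ^ d := by
        apply pow_le_pow_left₀ (by positivity)
        exact_mod_cast hkN
      calc C * (k : ℝ) ^ d * ((E₂ : ℝ) * 1) ≤ C * (N : ℝ) ^ d * ((E₂ : ℝ) * 1) := by
            apply mul_le_mul_of_nonneg_right _ (by positivity)
            exact mul_le_mul_of_nonneg_left hkN' hC.le
        _ = C * (E₂ : ℝ) * (N : ℝ) ^ d := by ring
  -- final contradiction
  have hfinal : ((β : ℝ)) ^ m < ((β : ℝ)) ^ m := by
    have hcastcount : ((Sph.ncard : ℕ) : ℝ) ≤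
        ∑ k ∈ Finset.Icc 1 N, ((WF k).card * (E₂ * β ^ (m - J k)) : ℝ) := by
      have := hcount
      calc ((Sph.ncard : ℕ) : ℝ) ≤
          ((∑ k ∈ Finset.Icc 1 N, (WF k).card * (E₂ * β ^ (m - J k)) : ℕ) : ℝ) := by
            exact_mod_cast this
        _ = ∑ k ∈ Finset.Icc 1 N, ((WF k).card * (E₂ * β ^ (m - J k)) : ℝ) := by
            push_cast; ring
    have hsum1 : ∑ k ∈ Finset.Icc 1 N, ((WF k).card * (E₂ * β ^ (m - J k)) : ℝ) ≤
        (C * (E₂ : ℝ) * (β : ℝ) ^ m * ((β : ℝ) ^ s)⁻¹) *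
          (∑ k ∈ Finset.Icc 1 N, (k : ℝ) ^ d * (((β : ℝ) ^ ((k - 1) / (2 * A)))⁻¹)) +
          (N : ℝ) * (C * (E₂ : ℝ) * (N : ℝ) ^ d) := by
      calc ∑ k ∈ Finset.Icc 1 N, ((WF k).card * (E₂ * β ^ (m - J k)) : ℝ)
          ≤ ∑ k ∈ Finset.Icc 1 N, (C * (E₂ : ℝ) * (β : ℝ) ^ m * ((β : ℝ) ^ s)⁻¹ *
            ((k : ℝ) ^ d * (((β : ℝ) ^ ((k - 1) / (2 * A)))⁻¹)) + C * (E₂ : ℝ) * (N : ℝ) ^ d) := by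
            refine Finset.sum_le_sum fun k hk => ?_
            rw [Finset.mem_Icc] at hk
            exact hterm k hk.1 hk.2
        _ = (C * (E₂ : ℝ) * (β : ℝ) ^ m * ((β : ℝ) ^ s)⁻¹) *
            (∑ k ∈ Finset.Icc 1 N, (k : ℝ) ^ d * (((β : ℝ) ^ ((k - 1) / (2 * A)))⁻¹)) +
            ((Finset.Icc 1 N).card : ℝ) * (C * (E₂ : ℝ) * (N : ℝ) ^ d) := by
            rw [Finset.sum_add_distrib, Finset.mul_sum, Finset.sum_const]
            push_cast
            ring
        _ = (C * (E₂ : ℝ) * (β : ℝ) ^ m * ((β : ℝ) ^ s)⁻¹) *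
            (∑ k ∈ Finset.Icc 1 N, (k : ℝ) ^ d * (((β : ℝ) ^ ((k - 1) / (2 * A)))⁻¹)) +
            (N : ℝ) * (C * (E₂ : ℝ) * (N : ℝ) ^ d) := by
            rw [Nat.card_Icc]
            norm_num
    have hZs := hZ (Finset.Icc 1 N)
    have hhalf1 : (C * (E₂ : ℝ) * (β : ℝ) ^ m * ((β : ℝ) ^ s)⁻¹) *
        (∑ k ∈ Finset.Icc 1 N, (k : ℝ) ^ d * (((β : ℝ) ^ ((k - 1) / (2 * A)))⁻¹)) <
        (β : ℝ) ^ m / 2 := by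
      have hfac0 : (0 : ℝ) ≤ C * (E₂ : ℝ) * (β : ℝ) ^ m * ((β : ℝ) ^ s)⁻¹ := by positivity
      have h1 : (C * (E₂ : ℝ) * (β : ℝ) ^ m * ((β : ℝ) ^ s)⁻¹) *
          (∑ k ∈ Finset.Icc 1 N, (k : ℝ) ^ d * (((β : ℝ) ^ ((k - 1) / (2 * A)))⁻¹)) ≤
          (C * (E₂ : ℝ) * (β : ℝ) ^ m * ((β : ℝ) ^ s)⁻¹) * Z :=
        mul_le_mul_of_nonneg_left hZs hfac0
      refine lt_of_le_of_lt h1 ?_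
      have hβs : (0 : ℝ) < (β : ℝ) ^ s := by positivity
      have hβm : (0 : ℝ) < (β : ℝ) ^ m := by positivity
      rw [div_eq_mul_inv, show C * (E₂ : ℝ) * (β : ℝ) ^ m * ((β : ℝ) ^ s)⁻¹ * Z =
        (β : ℝ) ^ m * ((C * (E₂ : ℝ) * Z) * ((β : ℝ) ^ s)⁻¹) by ring,
        show (β : ℝ) ^ m * (2 : ℝ)⁻¹ = (β : ℝ) ^ m * (2 : ℝ)⁻¹ from rfl]
      apply mul_lt_mul_of_pos_left _ hβm
      rw [show (2 : ℝ)⁻¹ = (1 : ℝ) / 2 by norm_num]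
      rw [lt_div_iff₀ (by norm_num : (0:ℝ) < 2)]
      calc C * (E₂ : ℝ) * Z * ((β : ℝ) ^ s)⁻¹ * 2 = (2 * C * (E₂ : ℝ) * Z) * ((β : ℝ) ^ s)⁻¹ := by
            ring
        _ < ((β : ℝ) ^ s) * ((β : ℝ) ^ s)⁻¹ := by
            apply mul_lt_mul_of_pos_right hs (by positivity)
        _ = 1 := mul_inv_cancel₀ (ne_of_gt hβs)
    have hhalf2 : (N : ℝ) * (C * (E₂ : ℝ) * (N : ℝ) ^ d) < (β : ℝ) ^ m / 2 := by
      have : (N : ℝ) * (C * (E₂ : ℝ) * (N : ℝ) ^ d) = C * (E₂ : ℝ) * (N : ℝ) ^ (d + 1) := by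
        rw [pow_succ]
        ring
      rw [this]
      rw [lt_div_iff₀ (by norm_num : (0:ℝ) < 2)]
      calc C * (E₂ : ℝ) * (N : ℝ) ^ (d + 1) * 2 = 2 * C * (E₂ : ℝ) * ((N : ℕ) : ℝ) ^ (d + 1) := by
            ring
        _ < (β : ℝ) ^ m := hmN
    have hlow : ((β : ℝ)) ^ m ≤ ((Sph.ncard : ℕ) : ℝ) := by
      calc ((β : ℝ)) ^ m = (((β ^ m : ℕ) : ℝ)) := by push_cast; ring
        _ ≤ ((Sph.ncard : ℕ) : ℝ) := by exact_mod_cast hSphlow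
    calc ((β : ℝ)) ^ m ≤ ((Sph.ncard : ℕ) : ℝ) := hlow
      _ ≤ _ := hcastcount
      _ ≤ _ := hsum1
      _ < (β : ℝ) ^ m / 2 + (β : ℝ) ^ m / 2 := by
          exact add_lt_add hhalf1 hhalf2
      _ = (β : ℝ) ^ m := by ring
  exact lt_irrefl _ hfinal

end MainProof
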